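/- Suppose conditions A1 and A2 hold and the target density f is bounded away from 0 and ∞ on compact sets. Then every nonempty compact set C ⊆ ℝ^d is small for the Metropolis–Hastings kernel P: with ε := inf_{x,y ∈ C} q(x,y) > 0 and u := sup_{x ∈ C} f(x) < ∞, one has P(x,B) ≥ (ε/u)·F(B) for all x ∈ C and all measurable B ⊆ C, where F is the probability measure with density f. -/

import Mathlib

open MeasureTheory Filter

noncomputable section

abbrev Ed (d : ℕ) := EuclideanSpace ℝ (Fin d)

variable {d : ℕ}

/-- The quadratic form `vᵀ M v`. -/
def quadForm (M : Matrix (Fin d) (Fin d) ℝ) (v : Ed d) : ℝ :=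
  ∑ i, ∑ j, v i * M i j * v j

/-- A matrix acting on a Euclidean vector. -/
def mvec (M : Matrix (Fin d) (Fin d) ℝ) (v : Ed d) : Ed d :=
  (WithLp.equiv 2 (Fin d → ℝ)).symm (M.mulVec (WithLp.equiv 2 (Fin d → ℝ) v))

/-- Gaussian proposal density with mean `c x` and covariance `h • G x`. -/
def mhq (h : ℝ) (c : Ed d → Ed d) (G : Ed d → Matrix (Fin d) (Fin d) ℝ)
    (x y : Ed d) : ℝ :=
  (2 * Real.pi * h) ^ (-(d : ℝ) / 2) * (G x).det ^ (-(1 : ℝ) / 2) *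
    Real.exp (-quadForm (G x)⁻¹ (y - c x) / (2 * h))

/-- Metropolis–Hastings acceptance probability. -/
def mhAccept (f : Ed d → ℝ) (q : Ed d → Ed d → ℝ) (x y : Ed d) : ℝ :=
  min 1 (f y * q y x / (f x * q x y))

/-- Metropolis–Hastings rejection probability. -/
def mhRej (f : Ed d → ℝ) (q : Ed d → Ed d → ℝ) (x : Ed d) : ℝ :=
  1 - ∫ y, mhAccept f q x y * q x y

/-- The Metropolis–Hastings transition kernel. -/
def mhKernel (f : Ed d → ℝ) (q : Ed d → Ed d → ℝ) (x : Ed d) : Measure (Ed d) :=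
  volume.withDensity (fun y => ENNReal.ofReal (mhAccept f q x y * q x y)) +
    ENNReal.ofReal (mhRej f q x) • Measure.dirac x

/-- The `n`-step kernel. -/
def iterKernel (P : Ed d → Measure (Ed d)) : ℕ → Ed d → Measure (Ed d)
  | 0, x => Measure.dirac x
  | n + 1, x => (P x).bind (iterKernel P n)

/-- The target probability measure with density `f`. -/
def targetMeasure (f : Ed d → ℝ) : Measure (Ed d) :=
  volume.withDensity fun x => ENNReal.ofReal (f x)

/-- Geometric ergodicity of the chain `P` with target `F`. -/
def GeomErgodic (P : Ed d → Measure (Ed d)) (F : Measure (Ed d)) : Prop :=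
  ∃ (L : Ed d → ℝ) (ρ : ℝ), (∀ x, 0 ≤ L x) ∧ 0 < ρ ∧ ρ < 1 ∧
    ∀ (n : ℕ) (x : Ed d) (A : Set (Ed d)), MeasurableSet A →
      |(iterKernel P n x A).toReal - (F A).toReal| ≤ L x * ρ ^ n

/-- Potential rejection region. -/
def rejSet (f : Ed d → ℝ) (q : Ed d → Ed d → ℝ) (x : Ed d) : Set (Ed d) :=
  {y | f y * q y x < f x * q x y}

/-- The filter of `‖x‖ → ∞`. -/
def normAtTop (d : ℕ) : Filter (Ed d) := Filter.comap (fun x => ‖x‖) Filter.atTop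

/-- The constant `C₁`. -/
def C1const (f : Ed d → ℝ) (q : Ed d → Ed d → ℝ) : ℝ :=
  limsup (fun x => ∫ y in rejSet f q x, q x y * (1 - mhAccept f q x y)) (normAtTop d)

/-- The constant `C₂(s)`. -/
def C2const (d : ℕ) (h s : ℝ) (G₁ G₂ : Matrix (Fin d) (Fin d) ℝ) : ℝ :=
  h ^ (-(d : ℝ) / 2) * (Real.pi / 2) ^ (((d : ℝ) - 2) / 2) *
    (G₂.det / G₁.det) ^ ((1 : ℝ) / 2) * Real.exp (h * s ^ 2 / 2) *
    ∫ r in Set.Ioi (0 : ℝ), Real.exp (-(r - h * s) ^ 2 / (2 * h)) * r ^ ((d : ℝ) - 1)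

/-- Loewner order. -/
def LoewnerLE (A B : Matrix (Fin d) (Fin d) ℝ) : Prop := (B - A).PosSemidef

/-- A2 : bounded on bounded sets. -/
def BddOnBounded (c : Ed d → Ed d) : Prop :=
  ∀ M : ℝ, ∃ K : ℝ, ∀ x : Ed d, ‖x‖ ≤ M → ‖c x‖ ≤ K

/-- `f` is bounded away from `0` and `∞` on compact sets. -/
def BddAwayOnCompacts (f : Ed d → ℝ) : Prop :=
  ∀ K : Set (Ed d), IsCompact K → ∃ a b : ℝ, 0 < a ∧ ∀ x ∈ K, a ≤ f x ∧ f x ≤ b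


section AuxLemmas
open Matrix

lemma quadForm_dot (M : Matrix (Fin d) (Fin d) ℝ) (v : Ed d) :
    quadForm M v = dotProduct v (M.mulVec v) := by
  simp [quadForm, dotProduct, Matrix.mulVec, Finset.mul_sum, mul_assoc]

lemma quadForm_nonneg {M : Matrix (Fin d) (Fin d) ℝ} (hM : M.PosSemidef) (v : Ed d) :
    0 ≤ quadForm M v := by
  rw [quadForm_dot]; simpa using hM.dotProduct_mulVec_nonneg (WithLp.ofLp v)

lemma quadForm_sub (A B : Matrix (Fin d) (Fin d) ℝ) (v : Ed d) :
    quadForm (B - A) v = quadForm B v - quadForm A v := by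
  simp [quadForm, Matrix.sub_apply, sub_mul, mul_sub, Finset.sum_sub_distrib]

lemma quadForm_mono {A B : Matrix (Fin d) (Fin d) ℝ} (hAB : LoewnerLE A B) (v : Ed d) :
    quadForm A v ≤ quadForm B v := by
  have := quadForm_nonneg hAB v
  rw [quadForm_sub] at this; linarith

lemma abs_coord_le_norm (v : Ed d) (i : Fin d) : |v i| ≤ ‖v‖ := by
  have := EuclideanSpace.norm_eq v
  rw [this]
  rw [show |v i| = Real.sqrt (v i ^ 2) by rw [Real.sqrt_sq_eq_abs]]
  apply Real.sqrt_le_sqrt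
  rw [show v i ^ 2 = ‖v i‖ ^ 2 by simp [sq_abs]]
  exact Finset.single_le_sum (f := fun j => ‖v j‖ ^ 2) (fun j _ => sq_nonneg _) (Finset.mem_univ i)

lemma quadForm_le_sum (M : Matrix (Fin d) (Fin d) ℝ) (v : Ed d) :
    quadForm M v ≤ (∑ i, ∑ j, |M i j|) * ‖v‖ ^ 2 := by
  rw [Finset.sum_mul]
  apply Finset.sum_le_sum
  intro i _
  rw [Finset.sum_mul]
  apply Finset.sum_le_sum
  intro j _
  calc v i * M i j * v j ≤ |v i * M i j * v j| := le_abs_self _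
    _ = |M i j| * (|v i| * |v j|) := by rw [abs_mul, abs_mul]; ring
    _ ≤ |M i j| * (‖v‖ * ‖v‖) := by
        apply mul_le_mul_of_nonneg_left _ (abs_nonneg _)
        exact mul_le_mul (abs_coord_le_norm v i) (abs_coord_le_norm v j) (abs_nonneg _) (norm_nonneg _)
    _ = |M i j| * ‖v‖ ^ 2 := by ring

lemma quadForm_smul (M : Matrix (Fin d) (Fin d) ℝ) (a : ℝ) (v : Ed d) :
    quadForm M (a • v) = a ^ 2 * quadForm M v := by
  simp only [quadForm, PiLp.smul_apply, smul_eq_mul, Finset.mul_sum]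
  congr 1; ext i; congr 1; ext j; ring

lemma quadForm_continuous (M : Matrix (Fin d) (Fin d) ℝ) :
    Continuous fun v : Ed d => quadForm M v := by
  unfold quadForm
  apply continuous_finset_sum; intro i _
  apply continuous_finset_sum; intro j _
  have hi : Continuous fun v : Ed d => v i := (continuous_apply i).comp (PiLp.continuous_ofLp 2 _)
  have hj : Continuous fun v : Ed d => v j := (continuous_apply j).comp (PiLp.continuous_ofLp 2 _)
  exact (hi.mul continuous_const).mul hj

lemma exists_pos_lower {M : Matrix (Fin d) (Fin d) ℝ} (hM : M.PosDef) :
    ∃ lam : ℝ, 0 < lam ∧ ∀ v : Ed d, lam * ‖v‖ ^ 2 ≤ quadForm M v := by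
  by_cases hS : (Metric.sphere (0 : Ed d) 1).Nonempty
  · obtain ⟨v₀, hv₀, hmin'⟩ := (isCompact_sphere (0 : Ed d) 1).exists_isMinOn hS
      (quadForm_continuous M).continuousOn
    have hmin : ∀ v ∈ Metric.sphere (0 : Ed d) 1, quadForm M v₀ ≤ quadForm M v :=
      fun v hv => hmin' hv
    have hv₀n : ‖v₀‖ = 1 := by simpa using mem_sphere_zero_iff_norm.mp hv₀
    have hv₀0 : v₀ ≠ 0 := by intro h; rw [h] at hv₀n; simp at hv₀n
    have hpos : 0 < quadForm M v₀ := by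
      rw [quadForm_dot]
      simpa using hM.dotProduct_mulVec_pos (x := WithLp.ofLp v₀) (by simpa using hv₀0)
    refine ⟨quadForm M v₀, hpos, fun v => ?_⟩
    by_cases hv : v = 0
    · simp [hv, quadForm]
    · have hnv : (0:ℝ) < ‖v‖ := norm_pos_iff.mpr hv
      have hw : (‖v‖⁻¹ • v) ∈ Metric.sphere (0 : Ed d) 1 := by
        simp [norm_smul, abs_of_pos (inv_pos.mpr hnv), inv_mul_cancel₀ hnv.ne']
      have := hmin _ hw
      rw [quadForm_smul] at this
      have h3 : ‖v‖⁻¹ ^ 2 * quadForm M v * ‖v‖ ^ 2 = quadForm M v := by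
        field_simp
      nlinarith [mul_le_mul_of_nonneg_right this (sq_nonneg ‖v‖)]
  · refine ⟨1, one_pos, fun v => ?_⟩
    have hv : v = 0 := by
      by_contra hv
      exact hS ⟨‖v‖⁻¹ • v, by simp [norm_smul, abs_of_pos (inv_pos.mpr (norm_pos_iff.mpr hv)),
        inv_mul_cancel₀ (norm_pos_iff.mpr hv).ne']⟩
    simp [hv, quadForm]

lemma dot_eq_inner (a b : Ed d) :
    dotProduct (a : Fin d → ℝ) (b : Fin d → ℝ) = (inner ℝ a b : ℝ) := by
  rw [PiLp.inner_apply]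
  simp [dotProduct, mul_comm]

lemma quadForm_inv_le {M : Matrix (Fin d) (Fin d) ℝ} (hM : M.PosDef) {lam : ℝ}
    (hlam : 0 < lam) (hL : ∀ v : Ed d, lam * ‖v‖ ^ 2 ≤ quadForm M v) (v : Ed d) :
    quadForm M⁻¹ v ≤ ‖v‖ ^ 2 / lam := by
  set w : Ed d := (WithLp.equiv 2 (Fin d → ℝ)).symm (M⁻¹.mulVec v) with hwdef
  have hwfun : (w : Fin d → ℝ) = M⁻¹.mulVec v := rfl
  have hMw : M.mulVec (w : Fin d → ℝ) = v := by
    rw [hwfun, Matrix.mulVec_mulVec, Matrix.mul_nonsing_inv _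
      (isUnit_iff_ne_zero.mpr hM.det_pos.ne'), Matrix.one_mulVec]
  have ht : quadForm M⁻¹ v = (inner ℝ v w : ℝ) := by
    rw [quadForm_dot, ← hwfun, dot_eq_inner]
  have hqw : quadForm M w = (inner ℝ v w : ℝ) := by
    rw [quadForm_dot, hMw, dot_eq_inner, real_inner_comm]
  have hcs : (inner ℝ v w : ℝ) ≤ ‖v‖ * ‖w‖ := real_inner_le_norm v w
  have hlow : lam * ‖w‖ ^ 2 ≤ (inner ℝ v w : ℝ) := hqw ▸ hL w
  rw [ht, le_div_iff₀ hlam]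
  by_cases hpos : (inner ℝ v w : ℝ) ≤ 0
  · nlinarith [sq_nonneg ‖v‖]
  · push_neg at hpos
    nlinarith [mul_le_mul hcs hcs hpos.le (by positivity : (0:ℝ) ≤ ‖v‖ * ‖w‖),
      sq_nonneg ‖v‖, sq_nonneg ‖w‖, norm_nonneg v, norm_nonneg w]

lemma det_le_of_quad_le {M : Matrix (Fin d) (Fin d) ℝ} (hM : M.PosDef)
    {Λ : ℝ} (hΛ : 0 ≤ Λ)
    (hq : ∀ v : Ed d, quadForm M v ≤ Λ * ‖v‖ ^ 2) : M.det ≤ Λ ^ d := by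
  have hH := hM.isHermitian
  have heig : ∀ i, hH.eigenvalues i ≤ Λ := by
    intro i
    have hnorm : ‖(hH.eigenvectorBasis i : Ed d)‖ = 1 := hH.eigenvectorBasis.orthonormal.1 i
    have heq := hH.eigenvalues_eq i
    have : hH.eigenvalues i = quadForm M (hH.eigenvectorBasis i) := by
      rw [heq, quadForm_dot]
      simp only [RCLike.star_def, starRingEnd_apply, star_trivial, RCLike.re_to_real]
    rw [this]
    calc quadForm M (hH.eigenvectorBasis i) ≤ Λ * ‖(hH.eigenvectorBasis i : Ed d)‖ ^ 2 := hq _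
      _ = Λ := by rw [hnorm]; ring
  have hdet : M.det = ∏ i, hH.eigenvalues i := by
    have := hH.det_eq_prod_eigenvalues
    simpa using this
  rw [hdet]
  calc ∏ i, hH.eigenvalues i ≤ ∏ _i : Fin d, Λ :=
      Finset.prod_le_prod (fun i _ => hM.posSemidef.eigenvalues_nonneg i) (fun i _ => heig i)
    _ = Λ ^ d := by simp

end AuxLemmas

/-- Under A1 and A2, with the target bounded away from `0` and `∞` on compact sets,
every nonempty compact set is small for the MH kernel, with minorizing measure `F`
and minorizing constant `ε/u` where `ε` is a positive lower bound for `q` on `C × C`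
and `u` an upper bound for `f` on `C`. -/
theorem compact_sets_small
    (d : ℕ) (h : ℝ) (hh : 0 < h)
    (f : Ed d → ℝ) (hfpos : ∀ x, 0 < f x) (hfmeas : Measurable f)
    (hfint : ∫ x, f x = 1)
    (c : Ed d → Ed d) (hcmeas : Measurable c)
    (G : Ed d → Matrix (Fin d) (Fin d) ℝ)
    (hGmeas : ∀ i j, Measurable fun x => G x i j)
    (hGpd : ∀ x, (G x).PosDef)
    (G₁ G₂ : Matrix (Fin d) (Fin d) ℝ) (hG₁ : G₁.PosDef) (hG₂ : G₂.PosDef)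
    -- A1
    (hA1 : ∀ x, LoewnerLE G₁ (G x) ∧ LoewnerLE (G x) G₂)
    -- A2
    (hA2 : BddOnBounded c)
    -- f bounded away from 0 and ∞ on compact sets
    (hfc : BddAwayOnCompacts f) :
    ∀ C : Set (Ed d), IsCompact C → C.Nonempty →
      ∃ ε u : ℝ, 0 < ε ∧ 0 < u ∧
        (∀ x ∈ C, ∀ y ∈ C, ε ≤ mhq h c G x y) ∧
        (∀ x ∈ C, f x ≤ u) ∧
        ∀ x ∈ C, ∀ B : Set (Ed d), B ⊆ C → MeasurableSet B →
          ENNReal.ofReal (ε / u) * targetMeasure f B ≤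
            mhKernel f (mhq h c G) x B := by
  intro C hC hCne
  obtain ⟨R₀, hR₀⟩ := hC.isBounded.exists_norm_le
  set R : ℝ := max R₀ 0 with hRdef
  have hR : ∀ y ∈ C, ‖y‖ ≤ R := fun y hy => (hR₀ y hy).trans (le_max_left _ _)
  have hR0 : (0:ℝ) ≤ R := le_max_right _ _
  obtain ⟨K₀, hK₀⟩ := hA2 R
  set K : ℝ := max K₀ 0 with hKdef
  have hK : ∀ x ∈ C, ‖c x‖ ≤ K := fun x hx => (hK₀ x (hR x hx)).trans (le_max_left _ _)
  have hK0 : (0:ℝ) ≤ K := le_max_right _ _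
  obtain ⟨lam, hlam, hlamG₁⟩ := exists_pos_lower hG₁
  have hlamG : ∀ (x : Ed d) (v : Ed d), lam * ‖v‖ ^ 2 ≤ quadForm (G x) v :=
    fun x v => (hlamG₁ v).trans (quadForm_mono (hA1 x).1 v)
  set Λ : ℝ := ∑ i, ∑ j, |G₂ i j| with hΛdef
  have hΛ0 : 0 ≤ Λ := Finset.sum_nonneg fun i _ => Finset.sum_nonneg fun j _ => abs_nonneg _
  have hquadup : ∀ (x : Ed d) (v : Ed d), quadForm (G x) v ≤ Λ * ‖v‖ ^ 2 :=
    fun x v => (quadForm_mono (hA1 x).2 v).trans (quadForm_le_sum G₂ v)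
  have hdet : ∀ x : Ed d, (G x).det ≤ Λ ^ d := fun x =>
    det_le_of_quad_le (hGpd x) hΛ0 (hquadup x)
  set D : ℝ := max (Λ ^ d) 1 with hDdef
  have hD0 : (0:ℝ) < D := lt_of_lt_of_le one_pos (le_max_right _ _)
  have hdetD : ∀ x : Ed d, (G x).det ≤ D := fun x => (hdet x).trans (le_max_left _ _)
  set M0 : ℝ := (R + K) ^ 2 / lam with hM0def
  have hquadC : ∀ x ∈ C, ∀ y ∈ C, quadForm (G x)⁻¹ (y - c x) ≤ M0 := by
    intro x hx y hy
    have h1 : quadForm (G x)⁻¹ (y - c x) ≤ ‖y - c x‖ ^ 2 / lam :=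
      quadForm_inv_le (hGpd x) hlam (hlamG x) _
    have h2 : ‖y - c x‖ ≤ R + K :=
      (norm_sub_le _ _).trans (add_le_add (hR y hy) (hK x hx))
    refine h1.trans ?_
    rw [hM0def]
    gcongr
  set ε : ℝ := (2 * Real.pi * h) ^ (-(d:ℝ)/2) * D ^ (-(1:ℝ)/2) * Real.exp (-M0 / (2*h))
    with hεdef
  have h2πh : (0:ℝ) < 2 * Real.pi * h := by positivity
  have hε : 0 < ε := by
    apply mul_pos (mul_pos _ _) (Real.exp_pos _)
    · exact Real.rpow_pos_of_pos h2πh _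
    · exact Real.rpow_pos_of_pos hD0 _
  have hqlow : ∀ x ∈ C, ∀ y ∈ C, ε ≤ mhq h c G x y := by
    intro x hx y hy
    have e1 : D ^ (-(1:ℝ)/2) ≤ (G x).det ^ (-(1:ℝ)/2) :=
      Real.rpow_le_rpow_of_nonpos (hGpd x).det_pos (hdetD x) (by norm_num)
    have e2 : Real.exp (-M0 / (2*h)) ≤ Real.exp (-quadForm (G x)⁻¹ (y - c x) / (2*h)) := by
      apply Real.exp_le_exp.mpr
      apply div_le_div_of_nonneg_right _ (by positivity)
      linarith [hquadC x hx y hy]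
    rw [mhq, hεdef]
    have hA0 : (0:ℝ) ≤ (2 * Real.pi * h) ^ (-(d:ℝ)/2) := (Real.rpow_pos_of_pos h2πh _).le
    have hB0 : (0:ℝ) ≤ D ^ (-(1:ℝ)/2) := (Real.rpow_pos_of_pos hD0 _).le
    exact mul_le_mul (mul_le_mul le_rfl e1 hB0 hA0) e2 (Real.exp_pos _).le
      (mul_nonneg hA0 (Real.rpow_pos_of_pos (hGpd x).det_pos _).le)
  obtain ⟨a, b, ha, hab⟩ := hfc C hC
  set u : ℝ := max b 1 with hudef
  have hu : (0:ℝ) < u := lt_of_lt_of_le one_pos (le_max_right _ _)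
  have hfu : ∀ x ∈ C, f x ≤ u := fun x hx => ((hab x hx).2).trans (le_max_left _ _)
  refine ⟨ε, u, hε, hu, hqlow, hfu, ?_⟩
  intro x hx B hBC hB
  have key : ∀ y ∈ B, ENNReal.ofReal (ε/u) * ENNReal.ofReal (f y)
      ≤ ENNReal.ofReal (mhAccept f (mhq h c G) x y * mhq h c G x y) := by
    intro y hy
    have hyC := hBC hy
    have hqxy : ε ≤ mhq h c G x y := hqlow x hx y hyC
    have hqyx : ε ≤ mhq h c G y x := hqlow y hyC x hx
    have hfxu : f x ≤ u := hfu x hx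
    have hfyu : f y ≤ u := hfu y hyC
    have hfx := hfpos x
    have hfy := hfpos y
    have hqxy0 : 0 < mhq h c G x y := lt_of_lt_of_le hε hqxy
    rw [← ENNReal.ofReal_mul (by positivity)]
    apply ENNReal.ofReal_le_ofReal
    rw [mhAccept, min_mul_of_nonneg _ _ hqxy0.le, one_mul]
    have hrw : f y * mhq h c G y x / (f x * mhq h c G x y) * mhq h c G x y
        = f y * (mhq h c G y x / f x) := by
      field_simp
    rw [hrw]
    apply le_min
    · calc ε / u * f y ≤ ε / u * u := by gcongr
        _ = ε := by field_simp
        _ ≤ mhq h c G x y := hqxy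
    · calc ε / u * f y = f y * (ε / u) := by ring
        _ ≤ f y * (mhq h c G y x / f x) := by
            apply mul_le_mul_of_nonneg_left _ hfy.le
            exact div_le_div₀ (lt_of_lt_of_le hε hqyx).le hqyx hfx hfxu
  calc ENNReal.ofReal (ε / u) * targetMeasure f B
      = ∫⁻ y in B, ENNReal.ofReal (ε/u) * ENNReal.ofReal (f y) ∂volume := by
        rw [targetMeasure, withDensity_apply _ hB,
          lintegral_const_mul _ hfmeas.ennreal_ofReal]
    _ ≤ ∫⁻ y in B, ENNReal.ofReal (mhAccept f (mhq h c G) x y * mhq h c G x y) ∂volume := by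
        apply lintegral_mono_ae
        filter_upwards [ae_restrict_mem hB] with y hy using key y hy
    _ = volume.withDensity
        (fun y => ENNReal.ofReal (mhAccept f (mhq h c G) x y * mhq h c G x y)) B :=
        (withDensity_apply _ hB).symm
    _ ≤ mhKernel f (mhq h c G) x B := by
        rw [mhKernel, Measure.add_apply]
        exact le_self_add


end
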